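/- Let V = ⨁_{k ∈ ℤ} V_k be as in the context, with ω a nondegenerate alternating bilinear form on V such that ω(v, w) = 0 whenever v ∈ V_j, w ∈ V_k and j + k ≠ 1, and assume V_k = 0 for all k < 0. Then the subspaces V_0 and V_1 are both Lagrangian: ω vanishes identically on V_0 × V_0 and on V_1 × V_1, and dim V_0 = dim V_1 = (dim V)/2. In particular dim V is even. -/

import Mathlib

/-- Let `V = ⨁_{k ∈ ℤ} V_k` be a finite-dimensional complex vector space with an
internal direct sum decomposition, and `ω` a nondegenerate alternating bilinear form on `V`
such that `ω v w = 0` whenever `v ∈ V j`, `w ∈ V k` and `j + k ≠ 1`. Assume `V k = 0` for all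
`k < 0`. Then `V 0` and `V 1` are both Lagrangian: `ω` vanishes identically on `V 0 × V 0`
and on `V 1 × V 1`, and `dim V 0 = dim V 1 = (dim V)/2`. In particular `dim V` is even. -/
theorem weight_zero_and_one_subspaces_lagrangian
    (V : Type*) [AddCommGroup V] [Module ℂ V] [FiniteDimensional ℂ V]
    (Vgr : ℤ → Submodule ℂ V) (hInt : DirectSum.IsInternal Vgr)
    (ω : V →ₗ[ℂ] V →ₗ[ℂ] ℂ)
    (halt : ∀ v : V, ω v v = 0)
    (hnd : ∀ v : V, (∀ w : V, ω v w = 0) → v = 0)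
    (hwt : ∀ j k : ℤ, j + k ≠ 1 → ∀ v ∈ Vgr j, ∀ w ∈ Vgr k, ω v w = 0)
    (hdef : ∀ k : ℤ, k < 0 → Vgr k = ⊥) :
    (∀ v ∈ Vgr 0, ∀ w ∈ Vgr 0, ω v w = 0) ∧
    (∀ v ∈ Vgr 1, ∀ w ∈ Vgr 1, ω v w = 0) ∧
    Module.finrank ℂ (Vgr 0) = Module.finrank ℂ (Vgr 1) ∧
    2 * Module.finrank ℂ (Vgr 0) = Module.finrank ℂ V ∧
    Even (Module.finrank ℂ V) := by
  have htop : iSup Vgr = ⊤ := hInt.submodule_iSup_eq_top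
  -- high weights vanish
  have hbot : ∀ k : ℤ, 2 ≤ k → Vgr k = ⊥ := by
    intro k hk
    rw [Submodule.eq_bot_iff]
    intro v hv
    apply hnd
    intro w
    have hw : w ∈ LinearMap.ker (ω v) := by
      have hle : iSup Vgr ≤ LinearMap.ker (ω v) := by
        apply iSup_le
        intro j
        rcases lt_or_ge j 0 with hj | hj
        · rw [hdef j hj]; exact bot_le
        · intro x hx
          exact hwt k j (by omega) v hv x hx
      exact hle (htop ▸ Submodule.mem_top)
    exact hw
  have hsup : Vgr 0 ⊔ Vgr 1 = ⊤ := by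
    rw [← htop]
    apply le_antisymm
    · exact sup_le (le_iSup Vgr 0) (le_iSup Vgr 1)
    · apply iSup_le
      intro j
      rcases lt_or_ge j 0 with hj | hj
      · rw [hdef j hj]; exact bot_le
      · rcases eq_or_lt_of_le hj with hj0 | hj0
        · rw [← hj0]; exact le_sup_left
        · rcases eq_or_lt_of_le (show (1:ℤ) ≤ j from hj0) with hj1 | hj1
          · rw [← hj1]; exact le_sup_right
          · rw [hbot j (by omega)]; exact bot_le
  have hinf : Vgr 0 ⊓ Vgr 1 = ⊥ := by
    have hind := hInt.submodule_iSupIndep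
    have := (hind 0).mono_right
      (le_iSup₂ (f := fun (j : ℤ) (_ : j ≠ 0) => Vgr j) 1 one_ne_zero)
    exact this.eq_bot
  -- every vector decomposes as w₀ + w₁
  have hdecomp : ∀ w : V, ∃ w0 ∈ Vgr 0, ∃ w1 ∈ Vgr 1, w = w0 + w1 := by
    intro w
    have hw : w ∈ Vgr 0 ⊔ Vgr 1 := hsup ▸ Submodule.mem_top
    rcases Submodule.mem_sup.mp hw with ⟨w0, h0, w1, h1, h⟩
    exact ⟨w0, h0, w1, h1, h.symm⟩
  have hlag0 : ∀ v ∈ Vgr 0, ∀ w ∈ Vgr 0, ω v w = 0 := fun v hv w hw =>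
    hwt 0 0 (by norm_num) v hv w hw
  have hlag1 : ∀ v ∈ Vgr 1, ∀ w ∈ Vgr 1, ω v w = 0 := fun v hv w hw =>
    hwt 1 1 (by norm_num) v hv w hw
  -- pairing maps
  have hinj01 : ∀ v ∈ Vgr 0, (∀ w ∈ Vgr 1, ω v w = 0) → v = 0 := by
    intro v hv h
    apply hnd
    intro w
    rcases hdecomp w with ⟨w0, h0, w1, h1, rfl⟩
    rw [map_add, hlag0 v hv w0 h0, h w1 h1, add_zero]
  have hinj10 : ∀ v ∈ Vgr 1, (∀ w ∈ Vgr 0, ω v w = 0) → v = 0 := by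
    intro v hv h
    apply hnd
    intro w
    rcases hdecomp w with ⟨w0, h0, w1, h1, rfl⟩
    rw [map_add, h w0 h0, hlag1 v hv w1 h1, add_zero]
  have hrank : Module.finrank ℂ (Vgr 0) = Module.finrank ℂ (Vgr 1) := by
    let f : Vgr 0 →ₗ[ℂ] Module.Dual ℂ (Vgr 1) :=
      { toFun := fun v => (ω v).domRestrict (Vgr 1)
        map_add' := fun _ _ => by ext w; simp
        map_smul' := fun _ _ => by ext w; simp }
    let g : Vgr 1 →ₗ[ℂ] Module.Dual ℂ (Vgr 0) :=
      { toFun := fun v => (ω v).domRestrict (Vgr 0)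
        map_add' := fun _ _ => by ext w; simp
        map_smul' := fun _ _ => by ext w; simp }
    have hf : Function.Injective f := by
      rw [injective_iff_map_eq_zero]
      intro v hv
      ext
      refine hinj01 v v.2 ?_
      intro w hw
      exact congrArg (fun φ => φ ⟨w, hw⟩) hv
    have hg : Function.Injective g := by
      rw [injective_iff_map_eq_zero]
      intro v hv
      ext
      refine hinj10 v v.2 ?_
      intro w hw
      exact congrArg (fun φ => φ ⟨w, hw⟩) hv
    have h1 := LinearMap.finrank_le_finrank_of_injective hf
    have h2 := LinearMap.finrank_le_finrank_of_injective hg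
    rw [Subspace.dual_finrank_eq] at h1 h2
    omega
  have hdim : Module.finrank ℂ (Vgr 0) + Module.finrank ℂ (Vgr 1) = Module.finrank ℂ V := by
    have := Submodule.finrank_sup_add_finrank_inf_eq (Vgr 0) (Vgr 1)
    rw [hsup, hinf, finrank_top, finrank_bot, add_zero] at this
    exact this.symm
  refine ⟨hlag0, hlag1, hrank, ?_, ?_⟩
  · omega
  · exact ⟨Module.finrank ℂ (Vgr 0), by omega⟩
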